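/- arXiv:1704.02460 — 4 statements merged into one kernel-verified Lean document; each statement's English description precedes it below -/
import Mathlib

section
/- Let (g, π, U, 𝔘, B) be a standard pentad over ℂ with Φ-map Φ. Then Φ is g-equivariant: for all b ∈ g, v ∈ U and φ ∈ 𝔘 one has Φ(π(b)v, φ) + Φ(v, b·φ) = ⁅b, Φ(v, φ)⁆, where (b·φ)(w) = −φ(π(b)w) is the dual action of g on 𝔘. -/
attribute [local instance 100] LieRing.ofAssociativeRing

/-- Let `(g, π, U, 𝔘, B)` be a standard pentad over `ℂ` with `Φ`-map `Φ`.
Here the `g`-submodule `𝔘 ⊆ Hom(U, ℂ)` is encoded abstractly as a `ℂ`-vector space `W`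
with a `g`-action `σ`, together with the canonical pairing `P : U × W → ℂ` (i.e.
`P v φ = φ(v)`), nondegenerate in both slots; the hypothesis `hσ` says that `σ` is the
dual action `(a·φ)(w) = -φ(π(a)w)`.  Then the `Φ`-map is `g`-equivariant:
`Φ(π(b)v, φ) + Φ(v, b·φ) = ⁅b, Φ(v, φ)⁆`. -/
theorem phiMap_equivariant
    {g U W : Type*} [LieRing g] [LieAlgebra ℂ g]
    [AddCommGroup U] [Module ℂ U] [AddCommGroup W] [Module ℂ W]
    (π : g →ₗ⁅ℂ⁆ Module.End ℂ U) (σ : g →ₗ⁅ℂ⁆ Module.End ℂ W)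
    (P : U →ₗ[ℂ] W →ₗ[ℂ] ℂ)
    (hP₁ : ∀ v : U, (∀ φ : W, P v φ = 0) → v = 0)
    (hP₂ : ∀ φ : W, (∀ v : U, P v φ = 0) → φ = 0)
    (hσ : ∀ (a : g) (v : U) (φ : W), P v (σ a φ) = - P (π a v) φ)
    (B : g →ₗ[ℂ] g →ₗ[ℂ] ℂ)
    (hBsymm : ∀ x y : g, B x y = B y x)
    (hBinv : ∀ x y z : g, B ⁅x, y⁆ z = B x ⁅y, z⁆)
    (hBnd : ∀ x : g, (∀ z : g, B x z = 0) → x = 0)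
    (Φ : U →ₗ[ℂ] W →ₗ[ℂ] g)
    (hΦ : ∀ (a : g) (v : U) (φ : W), B a (Φ v φ) = P (π a v) φ) :
    ∀ (b : g) (v : U) (φ : W),
      Φ (π b v) φ + Φ v (σ b φ) = ⁅b, Φ v φ⁆ := by
  intro b v φ
  have key : ∀ a : g, B a (Φ (π b v) φ + Φ v (σ b φ) - ⁅b, Φ v φ⁆) = 0 := by
    intro a
    have h1 : B a ⁅b, Φ v φ⁆ = B ⁅a, b⁆ (Φ v φ) := (hBinv a b (Φ v φ)).symm
    have h2 : π ⁅a, b⁆ = ⁅π a, π b⁆ := π.map_lie a b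
    have h3 : B ⁅a, b⁆ (Φ v φ) = P (π a (π b v)) φ - P (π b (π a v)) φ := by
      rw [hΦ, h2]
      simp [Ring.lie_def, sub_eq_add_neg]
    have h4 : B a (Φ v (σ b φ)) = - P (π b (π a v)) φ := by
      rw [hΦ, hσ]
    simp only [map_add, map_sub]
    rw [hΦ, h4, h1, h3]
    ring
  have := hBnd _ (fun z => by rw [hBsymm]; exact key z)
  exact sub_eq_zero.mp this
end

section
/- Let L be a Lie algebra over ℂ with a ℤ-grading by subspaces (L_n)_{n ∈ ℤ} (L is the internal direct sum of the L_n and ⁅L_i, L_j⁆ ⊆ L_{i+j}), and assume the grading is transitive: for every n ≥ 1 and x ∈ L_n, if ⁅x, y⁆ = 0 for all y ∈ L₋₁ then x = 0, and for every n ≤ −1 and x ∈ L_n, if ⁅x, y⁆ = 0 for all y ∈ L₁ then x = 0. Then every graded ideal J of L (i.e., an ideal equal to the sum of its components J ∩ L_n) satisfying J ∩ (L₋₁ ⊕ L₀ ⊕ L₁) = {0} is the zero ideal; in other words, L is minimal in Kac's sense. -/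
/-- Let `L` be a `ℤ`-graded Lie algebra over `ℂ` (internal direct sum of
subspaces `grading n` with `⁅L_i, L_j⁆ ⊆ L_{i+j}`) whose grading is transitive: a nonzero
element of `L_n` with `n ≥ 1` does not commute with all of `L_{-1}`, and a nonzero element
of `L_n` with `n ≤ -1` does not commute with all of `L_1`.  Then every graded ideal `J`
(i.e. `J = ⊕ₙ (J ∩ Lₙ)`) intersecting the local part `L_{-1} ⊕ L_0 ⊕ L_1` trivially is
the zero ideal; in other words, `L` is minimal in Kac's sense. -/
theorem gradedIdeal_trivial_of_transitive
    {L : Type*} [LieRing L] [LieAlgebra ℂ L]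
    (grading : ℤ → Submodule ℂ L)
    (internal : DirectSum.IsInternal grading)
    (bracket_grading : ∀ (i j : ℤ) (x y : L),
      x ∈ grading i → y ∈ grading j → ⁅x, y⁆ ∈ grading (i + j))
    (htrans_pos : ∀ n : ℤ, 1 ≤ n → ∀ x ∈ grading n,
      (∀ y ∈ grading (-1), ⁅x, y⁆ = 0) → x = 0)
    (htrans_neg : ∀ n : ℤ, n ≤ -1 → ∀ x ∈ grading n,
      (∀ y ∈ grading 1, ⁅x, y⁆ = 0) → x = 0)
    (J : LieIdeal ℂ L)
    (hJgraded : (J : Submodule ℂ L) = ⨆ n : ℤ, (J : Submodule ℂ L) ⊓ grading n)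
    (hJlocal : (J : Submodule ℂ L) ⊓ (grading (-1) ⊔ grading 0 ⊔ grading 1) = ⊥) :
    J = ⊥ := by
  have hloc : ∀ n : ℤ, n = -1 ∨ n = 0 ∨ n = 1 →
      (J : Submodule ℂ L) ⊓ grading n = ⊥ := by
    intro n hn
    refine le_antisymm (le_trans (inf_le_inf_left _ ?_) hJlocal.le) bot_le
    rcases hn with h | h | h <;> subst h
    · exact le_sup_of_le_left le_sup_left
    · exact le_sup_of_le_left le_sup_right
    · exact le_sup_right
  have hmemJ : ∀ x y : L, x ∈ (J : Submodule ℂ L) → ⁅x, y⁆ ∈ (J : Submodule ℂ L) := by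
    intro x y hx
    have h : ⁅y, x⁆ ∈ J := J.lie_mem hx
    have : ⁅x, y⁆ = -⁅y, x⁆ := by rw [lie_skew]
    rw [this]
    exact neg_mem h
  have hpos : ∀ k : ℕ, (J : Submodule ℂ L) ⊓ grading (1 + k) = ⊥ := by
    intro k
    induction k with
    | zero => simpa using hloc 1 (by simp)
    | succ m ih =>
      refine le_antisymm ?_ bot_le
      rintro x ⟨hxJ, hxg⟩
      simp only [Submodule.mem_bot]
      refine htrans_pos _ (by push_cast; omega) x hxg ?_
      intro y hy
      have h1 : ⁅x, y⁆ ∈ (J : Submodule ℂ L) := hmemJ x y hxJ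
      have h2 : ⁅x, y⁆ ∈ grading ((1 + ((m : ℤ) + 1)) + (-1)) :=
        bracket_grading _ _ x y hxg hy
      have h3 : ((1 : ℤ) + ((m : ℤ) + 1)) + (-1) = 1 + m := by ring
      rw [h3] at h2
      have : ⁅x, y⁆ ∈ (J : Submodule ℂ L) ⊓ grading (1 + m) := ⟨h1, h2⟩
      rw [ih] at this
      simpa using this
  have hneg : ∀ k : ℕ, (J : Submodule ℂ L) ⊓ grading (-1 - k) = ⊥ := by
    intro k
    induction k with
    | zero => simpa using hloc (-1) (by simp)
    | succ m ih =>
      refine le_antisymm ?_ bot_le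
      rintro x ⟨hxJ, hxg⟩
      simp only [Submodule.mem_bot]
      refine htrans_neg _ (by push_cast; omega) x hxg ?_
      intro y hy
      have h1 : ⁅x, y⁆ ∈ (J : Submodule ℂ L) := hmemJ x y hxJ
      have h2 : ⁅x, y⁆ ∈ grading ((-1 - ((m : ℤ) + 1)) + 1) :=
        bracket_grading _ _ x y hxg hy
      have h3 : ((-1 : ℤ) - ((m : ℤ) + 1)) + 1 = -1 - m := by ring
      rw [h3] at h2
      have : ⁅x, y⁆ ∈ (J : Submodule ℂ L) ⊓ grading (-1 - m) := ⟨h1, h2⟩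
      rw [ih] at this
      simpa using this
  have hall : ∀ n : ℤ, (J : Submodule ℂ L) ⊓ grading n = ⊥ := by
    intro n
    rcases le_or_gt 1 n with h | h
    · have : n = 1 + ((n - 1).toNat : ℤ) := by omega
      rw [this]; exact hpos _
    rcases le_or_gt n (-1) with h' | h'
    · have : n = -1 - ((-1 - n).toNat : ℤ) := by omega
      rw [this]; exact hneg _
    · have : n = 0 := by omega
      exact hloc n (by omega)
  have : (J : Submodule ℂ L) = ⊥ := by
    rw [hJgraded]
    exact iSup_eq_bot.mpr hall
  rw [eq_bot_iff]
  intro x hx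
  have hx' : x ∈ (J : Submodule ℂ L) := hx
  rw [this] at hx'
  simpa using hx'
end

section
/- Fix an integer n ≥ 2 and let Jₙ = [[Oₙ, Iₙ], [−Iₙ, Oₙ]] ∈ M(2n,2n;ℂ). Let X ∈ M(2n,3;ℂ) have row 1 = (1,0,0), row 2 = (0,1,0), row n+1 = (0,0,1) and all other rows zero, and let η ∈ M(2n,3;ℂ) have row 1 = (0,0,−1), row n+1 = (1,0,0) and all other rows zero. Then Tr(ᵀX Jₙ η) = 2, X ᵀη + η ᵀX = O_{2n}, and ᵀX Jₙ η + ᵀη Jₙ X = O₃. Consequently Φ(X ⊗ η) = (2, O_{2n}, O₃) = H₀, so that (η, H₀, X) is an sl₂-triple of the graded Lie algebra associated to the pentad, where H₀ = (2, O_{2n}, O₃) is the grading element. -/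
open Matrix

/-- The matrix `Jₙ = [[Oₙ, Iₙ], [−Iₙ, Oₙ]] ∈ M(2n, 2n; ℂ)`, with `M(2n, 2n; ℂ)` realised
as matrices indexed by `Fin n ⊕ Fin n`. -/
noncomputable def Jmat (n : ℕ) : Matrix (Fin n ⊕ Fin n) (Fin n ⊕ Fin n) ℂ :=
  Matrix.fromBlocks 0 1 (-1) 0

/-- The generic point `X ∈ M(2n, 3; ℂ)`: row `1` is `(1,0,0)`, row `2` is `(0,1,0)`,
row `n+1` is `(0,0,1)` and all other rows are zero.  (Rows `1, …, n` are indexed by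
`Sum.inl`, rows `n+1, …, 2n` by `Sum.inr`.) -/
noncomputable def Xmat (n : ℕ) (hn : 2 ≤ n) : Matrix (Fin n ⊕ Fin n) (Fin 3) ℂ :=
  Matrix.of fun i j =>
    if (i = Sum.inl ⟨0, by omega⟩ ∧ j = 0) ∨ (i = Sum.inl ⟨1, by omega⟩ ∧ j = 1)
        ∨ (i = Sum.inr ⟨0, by omega⟩ ∧ j = 2) then 1 else 0

/-- The matrix `η ∈ M(2n, 3; ℂ)`: row `1` is `(0,0,−1)`, row `n+1` is `(1,0,0)` and all
other rows are zero. -/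
noncomputable def etaMat (n : ℕ) (hn : 2 ≤ n) : Matrix (Fin n ⊕ Fin n) (Fin 3) ℂ :=
  Matrix.of fun i j =>
    if i = Sum.inl ⟨0, by omega⟩ ∧ j = 2 then -1
    else if i = Sum.inr ⟨0, by omega⟩ ∧ j = 0 then 1 else 0

lemma std_transpose {l m : Type*} [DecidableEq l] [DecidableEq m] (i : l) (j : m) (c : ℂ) :
    (Matrix.single i j c)ᵀ = Matrix.single j i c := by
  ext a b; simp [Matrix.single, and_comm]

lemma std_mul_std {l m o : Type*} [Fintype m] [DecidableEq l] [DecidableEq m] [DecidableEq o]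
    (i : l) (j j' : m) (k : o) (c d : ℂ) :
    Matrix.single i j c * Matrix.single j' k d
      = if j = j' then Matrix.single i k (c * d) else 0 := by
  ext a b
  simp only [mul_apply, Matrix.single, of_apply, ite_and]
  by_cases h : j = j' <;> by_cases h1 : i = a <;> by_cases h2 : k = b <;>
    simp [h, h1, h2, Finset.sum_ite_eq] <;> split_ifs <;> simp_all [mul_comm]

lemma std_neg {l m : Type*} [DecidableEq l] [DecidableEq m] (i : l) (j : m) (c : ℂ) :
    Matrix.single i j (-c) = -Matrix.single i j c := by
  ext a b; simp [Matrix.single]; split_ifs <;> simp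

lemma J_mul_inl (n : ℕ) (a : Fin n) (j : Fin 3) (c : ℂ) :
    Jmat n * (Matrix.single (Sum.inl a) j c : Matrix (Fin n ⊕ Fin n) (Fin 3) ℂ) = (Matrix.single (Sum.inr a) j (-c) : Matrix (Fin n ⊕ Fin n) (Fin 3) ℂ) := by
  ext i k
  simp only [Jmat, Matrix.mul_apply, Matrix.single, of_apply, ite_and, Fintype.sum_sum_type]
  cases i <;>
    simp [fromBlocks, one_apply, Finset.sum_ite_eq] <;>
    split_ifs <;> simp_all

lemma J_mul_inr (n : ℕ) (a : Fin n) (j : Fin 3) (c : ℂ) :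
    Jmat n * (Matrix.single (Sum.inr a) j c : Matrix (Fin n ⊕ Fin n) (Fin 3) ℂ) = (Matrix.single (Sum.inl a) j c : Matrix (Fin n ⊕ Fin n) (Fin 3) ℂ) := by
  ext i k
  simp only [Jmat, Matrix.mul_apply, Matrix.single, of_apply, ite_and, Fintype.sum_sum_type]
  cases i <;>
    simp [fromBlocks, one_apply, Finset.sum_ite_eq] <;>
    split_ifs <;> simp_all

lemma std_apply {l m : Type*} [DecidableEq l] [DecidableEq m] (i a : l) (j b : m) (c : ℂ) :
    Matrix.single i j c a b = if a = i ∧ b = j then c else 0 := by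
  rcases eq_or_ne i a with rfl | h1
  · rcases eq_or_ne j b with rfl | h2
    · simp [Matrix.single]
    · simp [Matrix.single, h2, h2.symm]
  · simp [Matrix.single, h1, h1.symm]

lemma X_eq (n : ℕ) (hn : 2 ≤ n) : Xmat n hn =
    Matrix.single (Sum.inl (⟨0, by omega⟩ : Fin n)) 0 1
      + Matrix.single (Sum.inl (⟨1, by omega⟩ : Fin n)) 1 1
      + Matrix.single (Sum.inr (⟨0, by omega⟩ : Fin n)) 2 1 := by
  ext i j
  simp only [Xmat, of_apply, Matrix.add_apply, std_apply]
  split_ifs <;> simp_all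

lemma eta_eq (n : ℕ) (hn : 2 ≤ n) : etaMat n hn =
    Matrix.single (Sum.inl (⟨0, by omega⟩ : Fin n)) 2 (-1)
      + Matrix.single (Sum.inr (⟨0, by omega⟩ : Fin n)) 0 1 := by
  ext i j
  simp only [etaMat, of_apply, Matrix.add_apply, std_apply]
  split_ifs <;> simp_all

/-- Fix `n ≥ 2`.  For the matrices `X` and `η` above one has
`Tr(ᵀX Jₙ η) = 2`, `X ᵀη + η ᵀX = O_{2n}` and `ᵀX Jₙ η + ᵀη Jₙ X = O₃`.  Consequently
`Φ(X ⊗ η) = (Tr(ᵀX Jₙ η), −½(X ᵀη + η ᵀX)Jₙ, ½(ᵀX Jₙ η + ᵀη Jₙ X)) = (2, O_{2n}, O₃) = H₀`,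
so that `(η, H₀, X)` is an `sl₂`-triple of the graded Lie algebra associated to the
pentad, where `H₀ = (2, O_{2n}, O₃)` is the grading element. -/
theorem sl2_triple_of_generic_point (n : ℕ) (hn : 2 ≤ n) :
    ((Xmat n hn)ᵀ * Jmat n * etaMat n hn).trace = 2 ∧
    Xmat n hn * (etaMat n hn)ᵀ + etaMat n hn * (Xmat n hn)ᵀ = 0 ∧
    (Xmat n hn)ᵀ * Jmat n * etaMat n hn + (etaMat n hn)ᵀ * Jmat n * Xmat n hn = 0 ∧
    (-(1/2 : ℂ)) • ((Xmat n hn * (etaMat n hn)ᵀ + etaMat n hn * (Xmat n hn)ᵀ) * Jmat n)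
      = 0 ∧
    (1/2 : ℂ) • ((Xmat n hn)ᵀ * Jmat n * etaMat n hn + (etaMat n hn)ᵀ * Jmat n * Xmat n hn)
      = 0 := by
  have h1 : (Xmat n hn)ᵀ * Jmat n * etaMat n hn
      = Matrix.single (0 : Fin 3) 0 (1 : ℂ) + Matrix.single (2 : Fin 3) 2 1 := by
    rw [X_eq n hn, eta_eq n hn]
    simp only [transpose_add, std_transpose, Matrix.mul_assoc, Matrix.mul_add,
      Matrix.add_mul, J_mul_inl, J_mul_inr, std_mul_std]
    simp
    abel
  have h3 : (Xmat n hn)ᵀ * Jmat n * etaMat n hn + (etaMat n hn)ᵀ * Jmat n * Xmat n hn = 0 := by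
    rw [h1, X_eq n hn, eta_eq n hn]
    simp only [transpose_add, std_transpose, Matrix.mul_assoc, Matrix.mul_add,
      Matrix.add_mul, J_mul_inl, J_mul_inr, std_mul_std]
    simp [std_neg]
    abel
  have h2 : Xmat n hn * (etaMat n hn)ᵀ + etaMat n hn * (Xmat n hn)ᵀ = 0 := by
    rw [X_eq n hn, eta_eq n hn]
    simp only [transpose_add, std_transpose, Matrix.mul_add, Matrix.add_mul, std_mul_std]
    simp [std_neg]
    abel
  refine ⟨?_, h2, h3, by rw [h2]; simp, by rw [h3]; simp⟩
  rw [h1]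
  simp [trace, diag, std_apply, Fin.sum_univ_three]
  norm_num
end

section
/- Fix an integer n ≥ 2 and let Jₙ = [[Oₙ, Iₙ], [−Iₙ, Oₙ]] ∈ M(2n,2n;ℂ). Let X ∈ M(2n,3;ℂ) have row 1 = (1,0,0), row 2 = (0,1,0), row n+1 = (0,0,1) and all other rows zero. If η ∈ M(2n,3;ℂ) satisfies Tr(ᵀX Jₙ η) = 0, X ᵀη + η ᵀX = O_{2n}, and ᵀX Jₙ η + ᵀη Jₙ X = O₃, then η = 0. In other words, the linear map η ↦ Φ(X ⊗ η) = (Tr(ᵀX Jₙ η), −½(X ᵀη + η ᵀX)Jₙ, ½(ᵀX Jₙ η + ᵀη Jₙ X)) from M(2n,3;ℂ) to gl₁ ⊕ sp_n ⊕ so₃ is injective, i.e., X is a generic point of the pentad. -/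
open Matrix

/-- Fix `n ≥ 2` and let `X` be as above.  If `η ∈ M(2n, 3; ℂ)`
satisfies `Tr(ᵀX Jₙ η) = 0`, `X ᵀη + η ᵀX = O_{2n}` and `ᵀX Jₙ η + ᵀη Jₙ X = O₃`, then
`η = 0`.  In other words, the linear map
`η ↦ Φ(X ⊗ η) = (Tr(ᵀX Jₙ η), −½(X ᵀη + η ᵀX)Jₙ, ½(ᵀX Jₙ η + ᵀη Jₙ X))` from
`M(2n, 3; ℂ)` to `gl₁ ⊕ sp_n ⊕ so₃` is injective, i.e. `X` is a generic point of the
pentad. -/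
theorem generic_point_injective
    (n : ℕ) (hn : 2 ≤ n) (η : Matrix (Fin n ⊕ Fin n) (Fin 3) ℂ)
    (h₁ : ((Xmat n hn)ᵀ * Jmat n * η).trace = 0)
    (h₂ : Xmat n hn * ηᵀ + η * (Xmat n hn)ᵀ = 0)
    (h₃ : (Xmat n hn)ᵀ * Jmat n * η + ηᵀ * Jmat n * Xmat n hn = 0) :
    η = 0 := by
  set E0 : Fin n := ⟨0, by omega⟩ with hE0def
  set E1 : Fin n := ⟨1, by omega⟩ with hE1def
  have hE : E0 ≠ E1 := by simp [hE0def, hE1def, Fin.ext_iff]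
  have hX : ∀ i j, Xmat n hn i j =
      if (i = Sum.inl E0 ∧ j = 0) ∨ (i = Sum.inl E1 ∧ j = 1) ∨ (i = Sum.inr E0 ∧ j = 2)
      then 1 else 0 := fun i j => rfl
  -- pointwise form of h₂
  have H2 : ∀ i i' : Fin n ⊕ Fin n,
      Xmat n hn i 0 * η i' 0 + Xmat n hn i 1 * η i' 1 + Xmat n hn i 2 * η i' 2
      + (η i 0 * Xmat n hn i' 0 + η i 1 * Xmat n hn i' 1 + η i 2 * Xmat n hn i' 2) = 0 := by
    intro i i'
    have h := congrFun (congrFun h₂ i) i'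
    simpa [Matrix.add_apply, Matrix.mul_apply, Fin.sum_univ_three,
      Matrix.transpose_apply] using h
  -- all rows other than the three special ones vanish
  have hrow : ∀ i' : Fin n ⊕ Fin n, i' ≠ Sum.inl E0 → i' ≠ Sum.inl E1 → i' ≠ Sum.inr E0 →
      ∀ j, η i' j = 0 := by
    intro i' h1 h2' h3' j
    have k0 : η i' 0 = 0 := by
      have := H2 (Sum.inl E0) i'
      simpa [hX, h1, h2', h3', hE, hE.symm] using this
    have k1 : η i' 1 = 0 := by
      have := H2 (Sum.inl E1) i'
      simpa [hX, h1, h2', h3', hE, hE.symm] using this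
    have k2 : η i' 2 = 0 := by
      have := H2 (Sum.inr E0) i'
      simpa [hX, h1, h2', h3', hE, hE.symm] using this
    fin_cases j <;> assumption
  -- diagonal entries from h₂
  have d00 : η (Sum.inl E0) 0 = 0 := by
    have := H2 (Sum.inl E0) (Sum.inl E0)
    have h := by simpa [hX, hE, hE.symm] using this
    exact h
  have d11 : η (Sum.inl E1) 1 = 0 := by
    have := H2 (Sum.inl E1) (Sum.inl E1)
    have h := by simpa [hX, hE, hE.symm] using this
    exact h
  have d22 : η (Sum.inr E0) 2 = 0 := by
    have := H2 (Sum.inr E0) (Sum.inr E0)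
    have h := by simpa [hX, hE, hE.symm] using this
    exact h
  -- off-diagonal relations from h₂
  have o01 : η (Sum.inl E1) 0 + η (Sum.inl E0) 1 = 0 := by
    have := H2 (Sum.inl E0) (Sum.inl E1)
    simpa [hX, hE, hE.symm] using this
  have o02 : η (Sum.inr E0) 0 + η (Sum.inl E0) 2 = 0 := by
    have := H2 (Sum.inl E0) (Sum.inr E0)
    simpa [hX, hE, hE.symm] using this
  have o12 : η (Sum.inr E0) 1 + η (Sum.inl E1) 2 = 0 := by
    have := H2 (Sum.inl E1) (Sum.inr E0)
    simpa [hX, hE, hE.symm] using this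
  -- entries of J * η
  have hJl : ∀ (p : Fin n) (b : Fin 3), (Jmat n * η) (Sum.inl p) b = η (Sum.inr p) b := by
    intro p b
    simp [Jmat, Matrix.mul_apply, Fintype.sum_sum_type, Matrix.one_apply, ite_mul]
  have hJr : ∀ (p : Fin n) (b : Fin 3), (Jmat n * η) (Sum.inr p) b = -η (Sum.inl p) b := by
    intro p b
    simp [Jmat, Matrix.mul_apply, Fintype.sum_sum_type, Matrix.one_apply, ite_mul]
  -- rows of Xᵀ * M
  have hXt0 : ∀ (M : Matrix (Fin n ⊕ Fin n) (Fin 3) ℂ) (b : Fin 3),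
      ((Xmat n hn)ᵀ * M) 0 b = M (Sum.inl E0) b := by
    intro M b
    simp [Matrix.mul_apply, Matrix.transpose_apply, hX, Fintype.sum_sum_type, ite_mul]
  have hXt1 : ∀ (M : Matrix (Fin n ⊕ Fin n) (Fin 3) ℂ) (b : Fin 3),
      ((Xmat n hn)ᵀ * M) 1 b = M (Sum.inl E1) b := by
    intro M b
    simp [Matrix.mul_apply, Matrix.transpose_apply, hX, Fintype.sum_sum_type, ite_mul]
  have hXt2 : ∀ (M : Matrix (Fin n ⊕ Fin n) (Fin 3) ℂ) (b : Fin 3),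
      ((Xmat n hn)ᵀ * M) 2 b = M (Sum.inr E0) b := by
    intro M b
    simp [Matrix.mul_apply, Matrix.transpose_apply, hX, Fintype.sum_sum_type, ite_mul]
  -- entries of A = Xᵀ J η
  have hA0 : ∀ b, ((Xmat n hn)ᵀ * Jmat n * η) 0 b = η (Sum.inr E0) b := by
    intro b; rw [Matrix.mul_assoc, hXt0, hJl]
  have hA1 : ∀ b, ((Xmat n hn)ᵀ * Jmat n * η) 1 b = η (Sum.inr E1) b := by
    intro b; rw [Matrix.mul_assoc, hXt1, hJl]
  have hA2 : ∀ b, ((Xmat n hn)ᵀ * Jmat n * η) 2 b = -η (Sum.inl E0) b := by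
    intro b; rw [Matrix.mul_assoc, hXt2, hJr]
  -- Jᵀ = -J, hence ηᵀ J X = -(Xᵀ J η)ᵀ and h₃ says A is symmetric
  have hJt : (Jmat n)ᵀ = -(Jmat n) := by
    simp [Jmat, Matrix.fromBlocks_transpose, Matrix.fromBlocks_neg]
  have hB : ηᵀ * Jmat n * Xmat n hn = -((Xmat n hn)ᵀ * Jmat n * η)ᵀ := by
    rw [Matrix.transpose_mul, Matrix.transpose_mul, Matrix.transpose_transpose, hJt]
    simp [Matrix.neg_mul, Matrix.mul_neg, Matrix.mul_assoc]
  have hsym : ((Xmat n hn)ᵀ * Jmat n * η) = ((Xmat n hn)ᵀ * Jmat n * η)ᵀ := by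
    rw [hB] at h₃
    rwa [add_neg_eq_zero] at h₃
  have hsym' : ∀ a b, ((Xmat n hn)ᵀ * Jmat n * η) a b = ((Xmat n hn)ᵀ * Jmat n * η) b a := by
    intro a b
    conv_lhs => rw [hsym]
    rfl
  -- nonzero entry facts from symmetry of A
  have hE1row : ∀ j, η (Sum.inr E1) j = 0 := by
    refine hrow (Sum.inr E1) (by simp) (by simp) (by simp [hE.symm])
  have s01 : η (Sum.inr E0) 1 = 0 := by
    have := hsym' 0 1
    rw [hA0, hA1] at this
    rw [this, hE1row]
  have s12 : η (Sum.inl E0) 1 = 0 := by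
    have := hsym' 1 2
    rw [hA1, hA2] at this
    have h2' := hE1row 2
    rw [h2'] at this
    linear_combination this
  -- trace condition
  have htr : η (Sum.inr E0) 0 + η (Sum.inr E1) 1 + -η (Sum.inl E0) 2 = 0 := by
    have h := h₁
    rw [Matrix.trace] at h
    rw [Fin.sum_univ_three] at h
    rw [Matrix.diag_apply, Matrix.diag_apply, Matrix.diag_apply, hA0, hA1, hA2] at h
    exact h
  have t1 : η (Sum.inr E0) 0 = η (Sum.inl E0) 2 := by
    have := hE1row 1
    rw [this] at htr
    linear_combination htr
  have z02 : η (Sum.inl E0) 2 = 0 := by linear_combination o02 / 2 - t1 / 2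
  have z20 : η (Sum.inr E0) 0 = 0 := by rw [t1, z02]
  have z10 : η (Sum.inl E1) 0 = 0 := by linear_combination o01 - s12
  have z12 : η (Sum.inl E1) 2 = 0 := by linear_combination o12 - s01
  -- conclude
  ext i j
  rcases i with p | p
  · by_cases hp0 : p = E0
    · subst hp0
      fin_cases j
      · exact d00
      · exact s12
      · exact z02
    · by_cases hp1 : p = E1
      · subst hp1
        fin_cases j
        · exact z10
        · exact d11
        · exact z12
      · exact hrow (Sum.inl p) (by simp [hp0]) (by simp [hp1]) (by simp) j
  · by_cases hp0 : p = E0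
    · subst hp0
      fin_cases j
      · exact z20
      · exact s01
      · exact d22
    · exact hrow (Sum.inr p) (by simp) (by simp) (by simp [hp0]) j
end
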